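/- arXiv:1804.09318 — 4 statements merged into one kernel-verified Lean document; each statement's English description precedes it below -/
import Mathlib

section
/- Let Ω ⊂ ℝ² be measurable with finite positive measure and let x ∈ ℝ². Then ∫_{ℝ² \ Ω} (2/(π|Ω|))·exp(−2‖x−y‖²/|Ω|) dy ≥ e^{−2/π} > 1/2. -/
open Real MeasureTheory Set Metric

local notation "E2" => EuclideanSpace ℝ (Fin 2)

lemma gauss_integrable {b : ℝ} (hb : 0 < b) :
    Integrable (fun v : E2 => Real.exp (-(b * ‖v‖ ^ 2))) := by
  have h := (GaussianFourier.integrable_cexp_neg_mul_sq_norm_add (V := E2)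
      (b := (b : ℂ)) (by simpa using hb) 0 0).norm
  refine h.congr (Filter.Eventually.of_forall fun v => ?_)
  simp [Complex.norm_exp, neg_mul, ← Complex.ofReal_pow]

lemma integral_Ioi_mul_exp {b : ℝ} (hb : 0 < b) (r : ℝ) :
    ∫ ρ in Ioi r, ρ * Real.exp (-(b * ρ ^ 2)) = Real.exp (-(b * r ^ 2)) / (2 * b) := by
  have hb' : (2 : ℝ) * b ≠ 0 := by positivity
  have hderiv : ∀ ρ ∈ Ici r, HasDerivAt (fun ρ => -Real.exp (-(b * ρ ^ 2)) / (2 * b))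
      (ρ * Real.exp (-(b * ρ ^ 2))) ρ := by
    intro ρ _
    have h1 : HasDerivAt (fun ρ : ℝ => -(b * ρ ^ 2)) (-(b * (2 * ρ))) ρ := by
      simpa using ((hasDerivAt_pow 2 ρ).const_mul b).fun_neg
    have h2 := (Real.hasDerivAt_exp (-(b * ρ ^ 2))).comp ρ h1
    have h3 := h2.neg.div_const (2 * b)
    refine h3.congr_deriv ?_
    field_simp
  have hint : IntegrableOn (fun ρ => ρ * Real.exp (-(b * ρ ^ 2))) (Ioi r) := by
    have := integrable_mul_exp_neg_mul_sq hb
    simp_rw [neg_mul] at this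
    exact this.integrableOn
  have htend : Filter.Tendsto (fun ρ => -Real.exp (-(b * ρ ^ 2)) / (2 * b))
      Filter.atTop (nhds 0) := by
    have h1 : Filter.Tendsto (fun ρ : ℝ => -(b * ρ ^ 2)) Filter.atTop Filter.atBot := by
      apply Filter.tendsto_neg_atBot_iff.mpr
      exact (Filter.tendsto_pow_atTop (by norm_num)).const_mul_atTop hb
    have h2 := (Real.tendsto_exp_atBot.comp h1).neg.div_const (2 * b)
    simpa using h2
  have := MeasureTheory.integral_Ioi_of_hasDerivAt_of_tendsto' hderiv hint htend
  rw [this]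
  field_simp
  ring

lemma planar_tail {b : ℝ} (hb : 0 < b) {r : ℝ} (hr : 0 ≤ r) :
    ∫ p : ℝ × ℝ, ({p : ℝ × ℝ | r ^ 2 ≤ p.1 ^ 2 + p.2 ^ 2}.indicator
        (fun p => Real.exp (-(b * (p.1 ^ 2 + p.2 ^ 2)))) p)
      = π / b * Real.exp (-(b * r ^ 2)) := by
  rw [← integral_comp_polarCoord_symm]
  set f : ℝ → ℝ := fun ρ => if r ^ 2 ≤ ρ ^ 2 then ρ * Real.exp (-(b * ρ ^ 2)) else 0 with hf
  have htrig : ∀ p : ℝ × ℝ, (p.1 * Real.cos p.2) ^ 2 + (p.1 * Real.sin p.2) ^ 2 = p.1 ^ 2 := by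
    intro p
    have := Real.sin_sq_add_cos_sq p.2
    nlinarith [this]
  have hfun : ∀ p : ℝ × ℝ, p.1 • ({p : ℝ × ℝ | r ^ 2 ≤ p.1 ^ 2 + p.2 ^ 2}.indicator
        (fun p => Real.exp (-(b * (p.1 ^ 2 + p.2 ^ 2)))) (polarCoord.symm p))
      = f p.1 * (1 : ℝ) := by
    intro p
    rw [Set.indicator_apply, polarCoord_symm_apply]
    simp only [Set.mem_setOf_eq, htrig ⟨p.1, p.2⟩]
    rw [hf]
    by_cases h : r ^ 2 ≤ p.1 ^ 2 <;> simp [h, smul_eq_mul]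
  simp_rw [hfun]
  have htarget : polarCoord.target = Ioi (0:ℝ) ×ˢ Ioo (-π) π := rfl
  rw [htarget, Measure.volume_eq_prod]
  have hprod : (∫ (p : ℝ × ℝ) in (Ioi (0:ℝ)) ×ˢ Ioo (-π) π, f p.1 * 1 ∂(volume.prod volume))
      = (∫ ρ in Ioi (0:ℝ), f ρ) * ∫ θ in Ioo (-π) π, (1:ℝ) :=
    setIntegral_prod_mul f (fun _ => (1:ℝ)) _ _
  rw [hprod]
  have h2 : ∫ θ in Ioo (-π) π, (1:ℝ) = 2 * π := by
    rw [setIntegral_const, Real.volume_real_Ioo, smul_eq_mul, mul_one,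
      max_eq_left (by linarith [Real.pi_pos])]
    ring
  have h1 : ∫ ρ in Ioi (0:ℝ), f ρ = Real.exp (-(b * r ^ 2)) / (2 * b) := by
    have hcong : ∀ ρ ∈ Ioi (0:ℝ), f ρ = (Ici r).indicator (fun ρ => ρ * Real.exp (-(b * ρ ^ 2))) ρ := by
      intro ρ hρ
      rw [hf, Set.indicator_apply]
      have : r ^ 2 ≤ ρ ^ 2 ↔ r ≤ ρ := pow_le_pow_iff_left₀ hr (le_of_lt hρ) two_ne_zero
      simp only [Set.mem_Ici, this]
    rw [setIntegral_congr_fun measurableSet_Ioi hcong,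
      setIntegral_indicator measurableSet_Ici]
    have hset : (Ioi (0:ℝ) ∩ Ici r : Set ℝ) =ᵐ[volume] Ioi r := by
      have e1 : (Ioi (0:ℝ) ∩ Ici r : Set ℝ) =ᵐ[volume] (Ioi (0:ℝ) ∩ Ioi r : Set ℝ) :=
        Filter.EventuallyEq.inter (Filter.EventuallyEq.refl _ _) Ioi_ae_eq_Ici.symm
      have e2 : (Ioi (0:ℝ) ∩ Ioi r : Set ℝ) = Ioi r := by
        rw [Set.Ioi_inter_Ioi, max_eq_right hr]
      rw [← e2]
      exact e1
    rw [setIntegral_congr_set hset, integral_Ioi_mul_exp hb]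
  rw [h1, h2]
  field_simp

lemma tail_integral {b : ℝ} (hb : 0 < b) {r : ℝ} (hr : 0 ≤ r) :
    ∫ y in (Metric.ball (0 : E2) r)ᶜ, Real.exp (-(b * ‖y‖ ^ 2))
      = π / b * Real.exp (-(b * r ^ 2)) := by
  classical
  have hφ := (EuclideanSpace.volume_preserving_symm_measurableEquiv_toLp (Fin 2)).symm
  have hψ := (volume_preserving_finTwoArrow ℝ).symm
  set F : E2 → ℝ := (Metric.ball (0 : E2) r)ᶜ.indicator (fun y => Real.exp (-(b * ‖y‖ ^ 2))) with hF
  have h1 : ∫ y in (Metric.ball (0 : E2) r)ᶜ, Real.exp (-(b * ‖y‖ ^ 2)) = ∫ y, F y :=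
    (integral_indicator measurableSet_ball.compl).symm
  rw [h1, ← hφ.integral_comp (MeasurableEquiv.measurableEmbedding _),
    ← hψ.integral_comp (MeasurableEquiv.measurableEmbedding _)]
  have hnorm : ∀ p : ℝ × ℝ,
      ‖(MeasurableEquiv.toLp 2 (Fin 2 → ℝ)) ((MeasurableEquiv.finTwoArrow).symm p)‖ ^ 2
        = p.1 ^ 2 + p.2 ^ 2 := by
    intro p
    rw [EuclideanSpace.norm_eq, Real.sq_sqrt (by positivity)]
    simp [Fin.sum_univ_two, MeasurableEquiv.toLp_apply, MeasurableEquiv.finTwoArrow, sq_abs]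
  have key : ∀ p : ℝ × ℝ,
      F ((MeasurableEquiv.toLp 2 (Fin 2 → ℝ)) ((MeasurableEquiv.finTwoArrow).symm p))
      = {p : ℝ × ℝ | r ^ 2 ≤ p.1 ^ 2 + p.2 ^ 2}.indicator
          (fun p => Real.exp (-(b * (p.1 ^ 2 + p.2 ^ 2)))) p := by
    intro p
    rw [hF, Set.indicator_apply, Set.indicator_apply]
    have hmem : (MeasurableEquiv.toLp 2 (Fin 2 → ℝ)) ((MeasurableEquiv.finTwoArrow).symm p)
        ∈ (Metric.ball (0 : E2) r)ᶜ ↔ p ∈ {p : ℝ × ℝ | r ^ 2 ≤ p.1 ^ 2 + p.2 ^ 2} := by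
      rw [Set.mem_compl_iff, Metric.mem_ball, not_lt, dist_zero_right, Set.mem_setOf_eq,
        ← hnorm p]
      exact (pow_le_pow_iff_left₀ hr (norm_nonneg _) two_ne_zero).symm
    rw [hnorm p]
    by_cases h : p ∈ {p : ℝ × ℝ | r ^ 2 ≤ p.1 ^ 2 + p.2 ^ 2}
    · rw [if_pos (hmem.mpr h), if_pos h]
    · rw [if_neg (fun hc => h (hmem.mp hc)), if_neg h]
  simp_rw [MeasurableEquiv.symm_symm, key]
  exact planar_tail hb hr

lemma tail_integral' {b : ℝ} (hb : 0 < b) {r : ℝ} (hr : 0 ≤ r) (x : E2) :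
    ∫ y in (Metric.ball x r)ᶜ, Real.exp (-(b * ‖x - y‖ ^ 2))
      = π / b * Real.exp (-(b * r ^ 2)) := by
  have hmp : MeasurePreserving (fun z : E2 => x - z) volume volume :=
    Measure.measurePreserving_sub_left volume x
  have hemb : MeasurableEmbedding (fun z : E2 => x - z) :=
    (MeasurableEquiv.subLeft x).measurableEmbedding
  have h := hmp.setIntegral_preimage_emb hemb
    (fun y => Real.exp (-(b * ‖x - y‖ ^ 2))) (Metric.ball x r)ᶜ
  have hpre : (fun z : E2 => x - z) ⁻¹' (Metric.ball x r)ᶜ = (Metric.ball (0 : E2) r)ᶜ := by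
    ext z
    simp only [Set.mem_preimage, Set.mem_compl_iff, Metric.mem_ball, dist_eq_norm, not_lt,
      sub_zero]
    rw [show x - z - x = -z by abel, norm_neg]
  rw [hpre] at h
  rw [← h]
  have heq : ∀ z : E2, Real.exp (-(b * ‖x - (x - z)‖ ^ 2)) = Real.exp (-(b * ‖z‖ ^ 2)) := by
    intro z
    rw [show x - (x - z) = z by abel]
  simp_rw [heq]
  exact tail_integral hb hr

lemma compare_integrals (Ω B : Set E2) (hm : MeasurableSet Ω) (hmB : MeasurableSet B)
    (f : E2 → ℝ) (hint : Integrable f volume) (c : ℝ)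
    (hfB : ∀ y ∈ B, c ≤ f y) (hfBc : ∀ y ∈ Bᶜ, f y ≤ c)
    (hvol : volume B = volume Ω) (hBfin : volume B < ⊤) :
    (∫ y in Ωᶜ, f y) ≥ ∫ y in Bᶜ, f y := by
  have hsplit1 : (∫ y in Ωᶜ ∩ B, f y) + ∫ y in Ωᶜ \ B, f y = ∫ y in Ωᶜ, f y :=
    integral_inter_add_diff hmB hint.integrableOn
  have hsplit2 : (∫ y in Bᶜ ∩ Ω, f y) + ∫ y in Bᶜ \ Ω, f y = ∫ y in Bᶜ, f y :=
    integral_inter_add_diff hm hint.integrableOn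
  have hsame : Ωᶜ \ B = Bᶜ \ Ω := by
    ext y; simp [Set.mem_diff, and_comm]
  have hmeas : volume (Ωᶜ ∩ B) = volume (Bᶜ ∩ Ω) := by
    have e1 : Ωᶜ ∩ B = B \ (B ∩ Ω) := by ext y; simp [Set.mem_diff]; tauto
    have e2 : Bᶜ ∩ Ω = Ω \ (B ∩ Ω) := by ext y; simp [Set.mem_diff]; tauto
    rw [e1, e2, measure_diff Set.inter_subset_left (hmB.inter hm).nullMeasurableSet
        (lt_of_le_of_lt (measure_mono Set.inter_subset_left) hBfin).ne,
      measure_diff Set.inter_subset_right (hmB.inter hm).nullMeasurableSet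
        (lt_of_le_of_lt (measure_mono Set.inter_subset_left) hBfin).ne,
      hvol]
  have hfin1 : volume (Ωᶜ ∩ B) ≠ ⊤ :=
    (lt_of_le_of_lt (measure_mono Set.inter_subset_right) hBfin).ne
  have hfin2 : volume (Bᶜ ∩ Ω) ≠ ⊤ := by rw [← hmeas]; exact hfin1
  have hge : c * (volume (Ωᶜ ∩ B)).toReal ≤ ∫ y in Ωᶜ ∩ B, f y :=
    setIntegral_ge_of_const_le_real (hm.compl.inter hmB) hfin1
      (fun y hy => hfB y hy.2) hint.integrableOn
  have hle : (∫ y in Bᶜ ∩ Ω, f y) ≤ c * (volume (Bᶜ ∩ Ω)).toReal := by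
    have := setIntegral_mono_on hint.integrableOn
      (integrableOn_const hfin2)
      (hmB.compl.inter hm) (fun y hy => hfBc y hy.1)
    rw [setIntegral_const, smul_eq_mul, mul_comm] at this
    exact this
  have htoReal : (volume (Ωᶜ ∩ B)).toReal = (volume (Bᶜ ∩ Ω)).toReal := by rw [hmeas]
  rw [htoReal] at hge
  rw [← hsplit1, ← hsplit2, hsame]
  linarith

theorem stmt7 (Ω : Set (EuclideanSpace ℝ (Fin 2))) (hm : MeasurableSet Ω)
    (h0 : 0 < volume Ω) (hfin : volume Ω < ⊤) (x : EuclideanSpace ℝ (Fin 2)) :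
    (∫ y in Ωᶜ,
        (2 / (π * (volume Ω).toReal)) *
          Real.exp (-(2 * ‖x - y‖ ^ 2 / (volume Ω).toReal))) ≥
      Real.exp (-(2 / π)) ∧
    Real.exp (-(2 / π)) > 1 / 2 := by
  constructor
  · set A : ℝ := (volume Ω).toReal with hA
    have hA0 : 0 < A := ENNReal.toReal_pos h0.ne' hfin.ne
    set b : ℝ := 2 / A with hb
    have hb0 : 0 < b := by positivity
    set k : ℝ := 2 / (π * A) with hk
    have hk0 : 0 < k := by positivity
    set r : ℝ := Real.sqrt (A / π) with hr
    have hr0 : 0 ≤ r := Real.sqrt_nonneg _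
    have hr2 : r ^ 2 = A / π := Real.sq_sqrt (by positivity)
    have hbr : b * r ^ 2 = 2 / π := by
      rw [hr2, hb]; field_simp
    set f : E2 → ℝ := fun y => k * Real.exp (-(b * ‖x - y‖ ^ 2)) with hf
    have hform : ∀ y : E2, (2 / (π * A)) * Real.exp (-(2 * ‖x - y‖ ^ 2 / A)) = f y := by
      intro y
      rw [hf, hk]
      congr 2
      rw [hb]; ring
    simp_rw [hk, hform]
    -- integrability of f
    have hint : Integrable f volume := by
      have h1 : Integrable (fun y : E2 => Real.exp (-(b * ‖y‖ ^ 2))) := gauss_integrable hb0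
      have hmp : MeasurePreserving (fun z : E2 => x - z) volume volume :=
        Measure.measurePreserving_sub_left volume x
      have hemb : MeasurableEmbedding (fun z : E2 => x - z) :=
        (MeasurableEquiv.subLeft x).measurableEmbedding
      have h2 := ((hmp.integrable_comp_emb hemb).mpr h1).const_mul k
      exact h2
    -- the ball with same volume
    set B : Set E2 := Metric.ball x r with hB
    have hmB : MeasurableSet B := measurableSet_ball
    have hvolB : volume B = volume Ω := by
      rw [hB, EuclideanSpace.volume_ball]
      simp only [Fintype.card_fin]
      norm_num
      rw [← ENNReal.ofReal_pow hr0, ← ENNReal.ofReal_pow (Real.sqrt_nonneg _), ← ENNReal.ofReal_mul (by positivity),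
        Real.sq_sqrt Real.pi_nonneg, hr2]
      rw [div_mul_cancel₀ _ (ne_of_gt Real.pi_pos), hA, ENNReal.ofReal_toReal hfin.ne]
    have hBfin : volume B < ⊤ := by rw [hvolB]; exact hfin
    set c : ℝ := k * Real.exp (-(b * r ^ 2)) with hc
    have hfB : ∀ y ∈ B, c ≤ f y := by
      intro y hy
      rw [hf, hc]
      apply mul_le_mul_of_nonneg_left _ hk0.le
      apply Real.exp_le_exp.mpr
      apply neg_le_neg
      apply mul_le_mul_of_nonneg_left _ hb0.le
      have : ‖x - y‖ ≤ r := by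
        rw [hB, Metric.mem_ball, dist_comm, dist_eq_norm] at hy
        exact hy.le
      exact pow_le_pow_left₀ (norm_nonneg _) this 2
    have hfBc : ∀ y ∈ Bᶜ, f y ≤ c := by
      intro y hy
      rw [hf, hc]
      apply mul_le_mul_of_nonneg_left _ hk0.le
      apply Real.exp_le_exp.mpr
      apply neg_le_neg
      apply mul_le_mul_of_nonneg_left _ hb0.le
      have : r ≤ ‖x - y‖ := by
        rw [hB, Set.mem_compl_iff, Metric.mem_ball, not_lt, dist_comm, dist_eq_norm] at hy
        exact hy
      exact pow_le_pow_left₀ hr0 this 2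
    have hcmp := compare_integrals Ω B hm hmB f hint c hfB hfBc hvolB hBfin
    have htail : ∫ y in Bᶜ, f y = Real.exp (-(2 / π)) := by
      rw [hf, hB]
      rw [MeasureTheory.integral_const_mul]
      rw [tail_integral' hb0 hr0 x, hbr]
      rw [hk, hb]
      have hπ : π ≠ 0 := ne_of_gt Real.pi_pos
      field_simp
    rw [← htail]
    exact hcmp
  · have hlog : 2 / π < Real.log 2 := by
      have h1 : 2 / π < 2 / 3 := by
        apply div_lt_div_of_pos_left (by norm_num) (by norm_num) Real.pi_gt_three
      have h2 : (0.6931471803 : ℝ) < Real.log 2 := Real.log_two_gt_d9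
      linarith
    have h2 : (1 : ℝ) / 2 = Real.exp (-Real.log 2) := by
      rw [Real.exp_neg, Real.exp_log (by norm_num)]
      norm_num
    rw [h2]
    exact Real.exp_lt_exp.mpr (by linarith)
end

section
/- With u_ε as above and Ω the unit disk, ∫_Ω max{1, log(|Ω|/‖y‖²)}·|Δu_ε(y)| dy = (2/ε²)·∫_{B(0,ε)} log(π/‖y‖²) dy (for ε small enough that log(π/‖y‖²) ≥ 1 on B(0,ε)), and this quantity is comparable to log(1/ε): there exist constants 0 < a ≤ b such that a·log(1/ε) ≤ (2/ε²)∫_{B(0,ε)} log(π/‖y‖²) dy ≤ b·(1 + log(1/ε)) for all ε ∈ (0, 1/2). -/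
open Real MeasureTheory Set Metric

/-- The Laplacian as the sum of pure second partial derivatives. -/
noncomputable def lap {n : ℕ} (u : EuclideanSpace ℝ (Fin n) → ℝ)
    (x : EuclideanSpace ℝ (Fin n)) : ℝ :=
  ∑ i : Fin n, fderiv ℝ (fun y => fderiv ℝ u y (EuclideanSpace.single i 1)) x
    (EuclideanSpace.single i 1)

/-- The radial function `u_ε` from the sharpness example on the unit disk. -/
noncomputable def uEps (ε : ℝ) (x : EuclideanSpace ℝ (Fin 2)) : ℝ :=
  if ‖x‖ ≤ ε then 1 / 2 - Real.log ε - ‖x‖ ^ 2 / (2 * ε ^ 2) else -Real.log ‖x‖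

section Aux
lemma lap_inner {ε : ℝ} (hε : 0 < ε) {x : EuclideanSpace ℝ (Fin 2)} (hx : ‖x‖ < ε) :
    lap (uEps ε) x = -(2 / ε ^ 2) := by
  let E := EuclideanSpace ℝ (Fin 2)
  set g : E → ℝ := fun y => 1 / 2 - Real.log ε - ‖y‖ ^ 2 / (2 * ε ^ 2) with hg
  have hU : Metric.ball (0:E) ε ∈ nhds x := isOpen_ball.mem_nhds (mem_ball_zero_iff.2 hx)
  have heq : ∀ y ∈ Metric.ball (0:E) ε, uEps ε y = g y := by
    intro y hy
    simp only [uEps, hg, if_pos (le_of_lt (mem_ball_zero_iff.1 hy))]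
  -- derivative of g
  have hgd : ∀ y : E, HasFDerivAt g (-((2 * ε ^ 2)⁻¹ • 2 • (innerSL ℝ y))) y := by
    intro y
    have h1 : HasFDerivAt (fun y : E => ‖y‖ ^ 2) (2 • (innerSL ℝ y)) y :=
      (hasStrictFDerivAt_norm_sq y).hasFDerivAt
    have h2 := ((h1.const_mul ((2 * ε ^ 2)⁻¹)).const_sub (1 / 2 - Real.log ε))
    have hfun : g = fun x => 1 / 2 - Real.log ε - (2 * ε ^ 2)⁻¹ * ‖x‖ ^ 2 := by
      ext z
      simp [hg, div_eq_inv_mul, mul_comm]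
    rw [hfun]
    exact h2
  -- fderiv of uEps on the ball
  have hfd : ∀ y ∈ Metric.ball (0:E) ε,
      fderiv ℝ (uEps ε) y = (-((2 * ε ^ 2)⁻¹ • 2 • (innerSL ℝ y))) := by
    intro y hy
    have hev : uEps ε =ᶠ[nhds y] g :=
      Filter.eventuallyEq_of_mem (isOpen_ball.mem_nhds hy) heq
    rw [hev.fderiv_eq, (hgd y).fderiv]
  have hone : ∀ i : Fin 2, (inner ℝ (EuclideanSpace.single i (1:ℝ)) (EuclideanSpace.single i (1:ℝ)) : ℝ) = 1 := by
    intro i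
    rw [EuclideanSpace.inner_single_left]
    simp [EuclideanSpace.single_apply]
  have key : ∀ i : Fin 2,
      (fderiv ℝ (fun y => fderiv ℝ (uEps ε) y (EuclideanSpace.single i 1)) x)
        (EuclideanSpace.single i 1) = -(ε^2)⁻¹ := by
    intro i
    set M : EuclideanSpace ℝ (Fin 2) →L[ℝ] ℝ :=
      (-(ε^2)⁻¹) • (innerSL ℝ (EuclideanSpace.single i (1:ℝ))) with hM
    have hev2 : (fun y => fderiv ℝ (uEps ε) y (EuclideanSpace.single i 1)) =ᶠ[nhds x]
        (fun y => M y) := by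
      refine Filter.eventuallyEq_of_mem hU (fun y hy => ?_)
      rw [hfd y hy]
      simp [hM, real_inner_comm]
      fin_cases i <;> simp <;> ring
    rw [hev2.fderiv_eq, M.fderiv]
    simp [hM, hone i]
  rw [lap, Finset.sum_congr rfl (fun i _ => key i)]
  simp
  field_simp

lemma lap_outer {ε : ℝ} (hε : 0 < ε) {x : EuclideanSpace ℝ (Fin 2)} (hx : ε < ‖x‖) :
    lap (uEps ε) x = 0 := by
  set U : Set (EuclideanSpace ℝ (Fin 2)) := {y | ε < ‖y‖} with hUdef
  have hUopen : IsOpen U := isOpen_lt continuous_const continuous_norm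
  have hU : U ∈ nhds x := hUopen.mem_nhds hx
  set g : EuclideanSpace ℝ (Fin 2) → ℝ := fun y => -((2:ℝ)⁻¹ * Real.log (‖y‖ ^ 2)) with hg
  have heq : ∀ y ∈ U, uEps ε y = g y := by
    intro y hy
    have hy0 : (0:ℝ) < ‖y‖ := lt_trans hε hy
    have hne : ¬ (‖y‖ ≤ ε) := not_le.2 hy
    simp only [uEps, hg, if_neg hne, Real.log_pow]
    push_cast
    ring
  have hgd : ∀ y ∈ U, HasFDerivAt g
      (-(((2:ℝ)⁻¹) • ((‖y‖ ^ 2)⁻¹ • (2 • (innerSL ℝ y))))) y := by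
    intro y hy
    have hy0 : (0:ℝ) < ‖y‖ := lt_trans hε hy
    have h1 : HasFDerivAt (fun y : EuclideanSpace ℝ (Fin 2) => ‖y‖ ^ 2)
        (2 • (innerSL ℝ y)) y := (hasStrictFDerivAt_norm_sq y).hasFDerivAt
    have hlog : HasDerivAt Real.log (‖y‖ ^ 2)⁻¹ (‖y‖ ^ 2) :=
      Real.hasDerivAt_log (by positivity)
    exact ((hlog.comp_hasFDerivAt y h1).const_mul ((2:ℝ)⁻¹)).neg
  have hfd : ∀ y ∈ U, fderiv ℝ (uEps ε) y
      = (-(((2:ℝ)⁻¹) • ((‖y‖ ^ 2)⁻¹ • (2 • (innerSL ℝ y))))) := by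
    intro y hy
    have hev : uEps ε =ᶠ[nhds y] g :=
      Filter.eventuallyEq_of_mem (hUopen.mem_nhds hy) heq
    rw [hev.fderiv_eq, (hgd y hy).fderiv]
  have hx0 : (0:ℝ) < ‖x‖ := lt_trans hε hx
  have hnsq : (0:ℝ) < ‖x‖ ^ 2 := by positivity
  have key : ∀ i : Fin 2,
      (fderiv ℝ (fun y => fderiv ℝ (uEps ε) y (EuclideanSpace.single i 1)) x)
        (EuclideanSpace.single i 1)
      = -(‖x‖ ^ 2)⁻¹ + 2 * (x i) ^ 2 * ((‖x‖ ^ 2) ^ 2)⁻¹ := by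
    intro i
    set N : EuclideanSpace ℝ (Fin 2) →L[ℝ] ℝ :=
      innerSL ℝ (EuclideanSpace.single i (1:ℝ)) with hN
    set ψ : EuclideanSpace ℝ (Fin 2) → ℝ := fun y => -((‖y‖ ^ 2)⁻¹ * N y) with hψ
    have hev2 : (fun y => fderiv ℝ (uEps ε) y (EuclideanSpace.single i 1)) =ᶠ[nhds x] ψ := by
      refine Filter.eventuallyEq_of_mem hU (fun y hy => ?_)
      rw [hfd y hy]
      simp [hψ, hN, real_inner_comm]
      fin_cases i <;> simp <;> ring
    -- derivative of ψ at x
    have h1 : HasFDerivAt (fun y : EuclideanSpace ℝ (Fin 2) => ‖y‖ ^ 2)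
        (2 • (innerSL ℝ x)) x := (hasStrictFDerivAt_norm_sq x).hasFDerivAt
    have hinv : HasFDerivAt (fun y : EuclideanSpace ℝ (Fin 2) => (‖y‖ ^ 2)⁻¹)
        (-((‖x‖ ^ 2) ^ 2)⁻¹ • (2 • (innerSL ℝ x))) x := (hasDerivAt_inv hnsq.ne').comp_hasFDerivAt x h1
    have hNder : HasFDerivAt (fun y : EuclideanSpace ℝ (Fin 2) => N y) N x := N.hasFDerivAt
    have hmul := (hinv.mul hNder).neg
    have hψder : HasFDerivAt ψ
        (-((‖x‖ ^ 2)⁻¹ • N + (N x) • (-((‖x‖ ^ 2) ^ 2)⁻¹ • (2 • (innerSL ℝ x))))) x := hmul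
    rw [hev2.fderiv_eq, hψder.fderiv]
    have hones : (inner ℝ (EuclideanSpace.single i (1:ℝ)) (EuclideanSpace.single i (1:ℝ)) : ℝ) = 1 := by
      rw [EuclideanSpace.inner_single_left]
      simp [EuclideanSpace.single_apply]
    simp [hN, hones, real_inner_comm, EuclideanSpace.inner_single_left,
      EuclideanSpace.inner_single_right]
    fin_cases i <;> simp <;> ring
  have hsum : ‖x‖ ^ 2 = (x 0) ^ 2 + (x 1) ^ 2 := by
    rw [EuclideanSpace.norm_eq, Real.sq_sqrt (by positivity)]
    simp [Fin.sum_univ_two, sq_abs]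
  rw [lap, Finset.sum_congr rfl (fun i _ => key i), Fin.sum_univ_two]
  field_simp
  nlinarith [hsum, hnsq]

lemma intBall (ε : ℝ) (hε : 0 < ε) :
    ∫ y in Metric.ball (0 : EuclideanSpace ℝ (Fin 2)) ε, Real.log (π / ‖y‖ ^ 2)
      = π * ε ^ 2 * (Real.log π + 1 - 2 * Real.log ε) := by
  have h1 : (∫ y in Metric.ball (0 : EuclideanSpace ℝ (Fin 2)) ε, Real.log (π / ‖y‖ ^ 2))
      = ∫ y : EuclideanSpace ℝ (Fin 2),
          Set.indicator (Set.Iio ε) (fun r => Real.log (π / r ^ 2)) ‖y‖ := by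
    rw [← integral_indicator measurableSet_ball]
    congr 1
    ext y
    by_cases h : ‖y‖ < ε <;>
      simp [Set.indicator_apply, Set.mem_Iio, mem_ball_zero_iff, h]
  rw [h1, MeasureTheory.integral_fun_norm_addHaar volume
    (Set.indicator (Set.Iio ε) (fun r => Real.log (π / r ^ 2)))]
  have hdim : Module.finrank ℝ (EuclideanSpace ℝ (Fin 2)) = 2 := by
    simp [finrank_euclideanSpace]
  rw [hdim]
  have hvol : (volume (Metric.ball (0 : EuclideanSpace ℝ (Fin 2)) 1)).toReal = π := by
    rw [EuclideanSpace.volume_ball]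
    have : Real.Gamma (1+1) = 1 := by
      rw [Real.Gamma_add_one one_ne_zero, Real.Gamma_one, mul_one]
    simp [Real.sq_sqrt Real.pi_pos.le, this, ENNReal.toReal_ofReal Real.pi_pos.le]
  rw [measureReal_def, hvol]
  have h2 : (∫ y in Set.Ioi (0:ℝ), y ^ (2-1) •
      Set.indicator (Set.Iio ε) (fun r => Real.log (π / r ^ 2)) y)
      = ∫ y in Set.Ioo (0:ℝ) ε, y * Real.log (π / y ^ 2) := by
    have : ∀ y : ℝ, y ^ (2-1) • Set.indicator (Set.Iio ε) (fun r => Real.log (π / r ^ 2)) y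
        = Set.indicator (Set.Iio ε) (fun r => r * Real.log (π / r ^ 2)) y := by
      intro y
      by_cases h : y < ε <;> simp [Set.indicator_apply, Set.mem_Iio, h]
    simp_rw [this]
    rw [integral_indicator measurableSet_Iio, Measure.restrict_restrict measurableSet_Iio]
    congr 1
    rw [Set.Iio_inter_Ioi]
  rw [h2]
  have h3 : (∫ y in Set.Ioo (0:ℝ) ε, y * Real.log (π / y ^ 2))
      = ε^2/2 * Real.log π - ε^2 * Real.log ε + ε^2/2 := by
    have hcong : (∫ y in Set.Ioo (0:ℝ) ε, y * Real.log (π / y ^ 2))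
        = ∫ y in Set.Ioo (0:ℝ) ε, (y * Real.log π - 2 * (y * Real.log y)) := by
      refine setIntegral_congr_fun measurableSet_Ioo (fun y hy => ?_)
      have hy0 : (0:ℝ) < y := hy.1
      rw [Real.log_div Real.pi_pos.ne' (by positivity), Real.log_pow]
      push_cast
      ring
    rw [hcong, ← MeasureTheory.integral_Ioc_eq_integral_Ioo,
      ← intervalIntegral.integral_of_le hε.le]
    set F : ℝ → ℝ := fun r => r^2/2 * Real.log π - (r * (r * Real.log r) - r^2/2) with hF
    have hcont : ContinuousOn F (Set.Icc 0 ε) := by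
      apply Continuous.continuousOn; fun_prop
    have hderiv : ∀ r ∈ Set.Ioo (0:ℝ) ε,
        HasDerivWithinAt F (r * Real.log π - 2 * (r * Real.log r)) (Set.Ioi r) r := by
      intro r hr
      have h1 : HasDerivAt F (r * Real.log π - 2 * (r * Real.log r)) r := by
        have hlog := Real.hasDerivAt_log hr.1.ne'
        have h2 : HasDerivAt (fun r : ℝ => r * Real.log r) (Real.log r + 1) r := by
          have := (hasDerivAt_id r).mul hlog
          refine this.congr_deriv ?_
          simp [hr.1.ne']
        have h3 : HasDerivAt (fun r : ℝ => r * (r * Real.log r))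
            (1 * (r * Real.log r) + r * (Real.log r + 1)) r := (hasDerivAt_id r).mul h2
        have h4 : HasDerivAt (fun r : ℝ => r^2/2 * Real.log π) (r * Real.log π) r := by
          have := (hasDerivAt_pow 2 r).div_const 2
          simpa using this.mul_const (Real.log π)
        have h5 : HasDerivAt (fun r : ℝ => r^2/2) (r : ℝ) r := by
          have := (hasDerivAt_pow 2 r).div_const 2
          refine this.congr_deriv ?_
          norm_num
        have := h4.sub (h3.sub h5)
        refine this.congr_deriv ?_
        ring
      exact h1.hasDerivWithinAt
    have hint : IntervalIntegrable (fun y : ℝ => y * Real.log π - 2 * (y * Real.log y))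
        volume 0 ε := by
      apply Continuous.intervalIntegrable; fun_prop
    rw [intervalIntegral.integral_eq_sub_of_hasDeriv_right_of_le hε.le hcont hderiv hint]
    simp only [hF, Real.log_zero]
    ring
  rw [h3]
  push_cast [nsmul_eq_mul, smul_eq_mul]
  ring

end Aux

theorem stmt10 :
    (∀ ε : ℝ, 0 < ε → ε < 1 →
      (∀ y : EuclideanSpace ℝ (Fin 2), 0 < ‖y‖ → ‖y‖ < ε → 1 ≤ Real.log (π / ‖y‖ ^ 2)) →
      (∫ y in Metric.ball (0 : EuclideanSpace ℝ (Fin 2)) 1,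
          max 1 (Real.log (π / ‖y‖ ^ 2)) * |lap (uEps ε) y|) =
        (2 / ε ^ 2) *
          ∫ y in Metric.ball (0 : EuclideanSpace ℝ (Fin 2)) ε, Real.log (π / ‖y‖ ^ 2)) ∧
    (∃ a b : ℝ, 0 < a ∧ a ≤ b ∧ ∀ ε ∈ Set.Ioo (0 : ℝ) (1 / 2),
      a * Real.log (1 / ε) ≤
          (2 / ε ^ 2) *
            ∫ y in Metric.ball (0 : EuclideanSpace ℝ (Fin 2)) ε, Real.log (π / ‖y‖ ^ 2) ∧
      (2 / ε ^ 2) *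
          (∫ y in Metric.ball (0 : EuclideanSpace ℝ (Fin 2)) ε, Real.log (π / ‖y‖ ^ 2)) ≤
        b * (1 + Real.log (1 / ε))) := by
  constructor
  · intro ε hε hε1 hlog
    have hcong : (∫ y in Metric.ball (0 : EuclideanSpace ℝ (Fin 2)) 1,
        max 1 (Real.log (π / ‖y‖ ^ 2)) * |lap (uEps ε) y|)
        = ∫ y in Metric.ball (0 : EuclideanSpace ℝ (Fin 2)) 1,
          Set.indicator (Metric.ball (0 : EuclideanSpace ℝ (Fin 2)) ε)
            (fun y => Real.log (π / ‖y‖ ^ 2) * (2 / ε ^ 2)) y := by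
      refine setIntegral_congr_ae measurableSet_ball ?_
      have h0 : volume ((Metric.sphere (0 : EuclideanSpace ℝ (Fin 2)) ε) ∪ {0}) = 0 := by
        refine measure_union_null (Measure.addHaar_sphere _ _ _) ?_
        exact measure_singleton 0
      filter_upwards [measure_eq_zero_iff_ae_notMem.1 h0] with y hy _
      have hy0 : y ≠ 0 := fun h => hy (Set.mem_union_right _ (h ▸ rfl))
      have hysph : ‖y‖ ≠ ε := fun h => hy (Set.mem_union_left _ (by simpa [mem_sphere_zero_iff_norm] using h))
      rcases lt_or_gt_of_ne hysph with hlt | hgt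
      · have hnorm : 0 < ‖y‖ := norm_pos_iff.2 hy0
        rw [lap_inner hε hlt, Set.indicator_of_mem (mem_ball_zero_iff.2 hlt),
          max_eq_right (hlog y hnorm hlt), abs_neg, abs_of_pos (by positivity)]
      · rw [lap_outer hε hgt, Set.indicator_of_notMem
          (fun h => absurd (mem_ball_zero_iff.1 h) (not_lt.2 hgt.le))]
        simp
    rw [hcong, integral_indicator measurableSet_ball,
      Measure.restrict_restrict measurableSet_ball,
      Set.inter_eq_self_of_subset_left (Metric.ball_subset_ball hε1.le),
      integral_mul_const]
    ring
  · refine ⟨4 * π, 2 * π * (Real.log π + 1) + 4 * π, by positivity, ?_, ?_⟩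
    · nlinarith [Real.pi_pos, Real.log_nonneg (by linarith [Real.pi_gt_three] : (1:ℝ) ≤ π)]
    · intro ε hε
      obtain ⟨hε0, hε2⟩ := hε
      rw [intBall ε hε0]
      have hval : (2 / ε ^ 2) * (π * ε ^ 2 * (Real.log π + 1 - 2 * Real.log ε))
          = 2 * π * (Real.log π + 1) + 4 * π * Real.log (1 / ε) := by
        rw [one_div, Real.log_inv]
        field_simp
        ring
      have hL : 0 ≤ Real.log (1 / ε) := Real.log_nonneg (by rw [le_div_iff₀ hε0]; linarith)
      have hπ : 0 ≤ Real.log π := Real.log_nonneg (by linarith [Real.pi_gt_three])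
      constructor
      · rw [hval]; nlinarith [Real.pi_pos]
      · rw [hval]
        nlinarith [Real.pi_pos, mul_nonneg hπ hL, mul_nonneg Real.pi_pos.le hL,
          mul_nonneg (mul_nonneg Real.pi_pos.le hπ) hL]
end

section
/- For every x in a measurable set Ω ⊂ ℝ² of finite measure, a standard planar Brownian motion started at x satisfies ℙ(∃ t ∈ [0, |Ω|/8] : ω_x(t) ∉ Ω) ≥ ℙ(ω_x(|Ω|/8) ∉ Ω) ≥ e^{−2/π} > 1/2. -/
open scoped Classical
open Real MeasureTheory Set Metric ENNReal

lemma int1d (a c r : ℝ) (ha : 0 < a) :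
    ∫ y in (0:ℝ)..r, y * (c * Real.exp (-(a * y^2))) =
      c / (2*a) * (1 - Real.exp (-(a * r^2))) := by
  have h : ∀ y : ℝ, HasDerivAt (fun y => -(c/(2*a)) * Real.exp (-(a * y^2)))
      (y * (c * Real.exp (-(a * y^2)))) y := by
    intro y
    have h1 : HasDerivAt (fun y : ℝ => -(a * y^2)) (-(a * (2*y))) y := by
      refine (((hasDerivAt_pow 2 y).const_mul a).neg).congr_deriv ?_
      norm_num
    have h2 := (h1.exp).const_mul (-(c/(2*a)))
    refine h2.congr_deriv ?_
    field_simp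
  rw [intervalIntegral.integral_eq_sub_of_hasDerivAt (fun y _ => h y)]
  · simp
    ring
  · apply Continuous.intervalIntegrable
    continuity

lemma ball_int (T : ℝ) (hT : 0 < T) (x : EuclideanSpace ℝ (Fin 2)) :
    ∫ y in ball x (Real.sqrt (T/π)),
      (2/(π*T)) * Real.exp (-(2*‖x-y‖^2/T)) = 1 - Real.exp (-(2/π)) := by
  set r := Real.sqrt (T/π) with hr
  set c : ℝ := 2/(π*T) with hc
  set a : ℝ := 2/T with ha
  have hapos : 0 < a := by positivity
  have hr2 : r^2 = T/π := Real.sq_sqrt (by positivity)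
  set F : ℝ → ℝ := fun s => if s < r then c * Real.exp (-(a * s^2)) else 0 with hF
  have key : ∀ y : EuclideanSpace ℝ (Fin 2),
      Set.indicator (ball x r) (fun y => (2/(π*T)) * Real.exp (-(2*‖x-y‖^2/T))) y
        = F (‖y - x‖) := by
    intro y
    rw [Set.indicator_apply, mem_ball, dist_eq_norm, hF]
    have : ‖x - y‖ = ‖y - x‖ := norm_sub_rev x y
    simp only [this]
    have : -(2*‖y-x‖^2/T) = -(a * ‖y-x‖^2) := by rw [ha]; ring
    rw [this]
  calc ∫ y in ball x r, (2/(π*T)) * Real.exp (-(2*‖x-y‖^2/T))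
      = ∫ y : EuclideanSpace ℝ (Fin 2), F (‖y - x‖) := by
        rw [← MeasureTheory.integral_indicator measurableSet_ball]
        exact integral_congr_ae (Filter.Eventually.of_forall key)
    _ = ∫ y : EuclideanSpace ℝ (Fin 2), F (‖y‖) :=
        MeasureTheory.integral_sub_right_eq_self (fun z => F ‖z‖) x
    _ = (2:ℕ) • (volume (ball (0:EuclideanSpace ℝ (Fin 2)) 1)).toReal •
          ∫ y in Ioi (0:ℝ), y ^ (2 - 1) • F y := by
        rw [MeasureTheory.integral_fun_norm_addHaar volume F, finrank_euclideanSpace]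
        simp [Measure.real]
    _ = 1 - Real.exp (-(2/π)) := by
        have hvol : (volume (ball (0:EuclideanSpace ℝ (Fin 2)) 1)).toReal = π := by
          rw [EuclideanSpace.volume_ball]
          simp [Real.sq_sqrt Real.pi_pos.le, Real.Gamma_two]
          rw [show (1:ℝ)+1 = 2 by norm_num, Real.Gamma_two]
          simp [Real.pi_pos.le]
        have hrpos : 0 < r := Real.sqrt_pos.mpr (by positivity)
        have hind : ∀ y : ℝ, y ^ (2-1) • F y
            = Set.indicator (Iio r) (fun y => y * (c * Real.exp (-(a * y^2)))) y := by
          intro y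
          rw [Set.indicator_apply, hF]
          simp only [pow_one, smul_eq_mul, mem_Iio]
          split <;> simp
        simp only [hind]
        rw [MeasureTheory.setIntegral_indicator measurableSet_Iio, Set.Ioi_inter_Iio,
          ← MeasureTheory.integral_Ioc_eq_integral_Ioo,
          ← intervalIntegral.integral_of_le hrpos.le, int1d a c r hapos, hvol]
        have har2 : a * r^2 = 2/π := by
          rw [hr2, ha]; field_simp
        rw [har2]
        have hπ : (0:ℝ) < π := Real.pi_pos
        rw [hc, ha]
        simp only [nsmul_eq_mul, smul_eq_mul, Nat.cast_ofNat]
        field_simp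

theorem stmt17 {W : Type*} [MeasurableSpace W] (P : Measure W) [IsProbabilityMeasure P]
    (Ω : Set (EuclideanSpace ℝ (Fin 2))) (hm : MeasurableSet Ω)
    (h0 : 0 < volume Ω) (hfin : volume Ω < ⊤)
    (x : EuclideanSpace ℝ (Fin 2)) (X : ℝ → W → EuclideanSpace ℝ (Fin 2))
    (hX : Measurable (X ((volume Ω).toReal / 8)))
    (hlaw : P.map (X ((volume Ω).toReal / 8)) =
      volume.withDensity fun y =>
        ENNReal.ofReal
          ((2 / (π * (volume Ω).toReal)) *
            Real.exp (-(2 * ‖x - y‖ ^ 2 / (volume Ω).toReal)))) :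
    P {w | ∃ t ∈ Set.Icc (0 : ℝ) ((volume Ω).toReal / 8), X t w ∉ Ω} ≥
        P {w | X ((volume Ω).toReal / 8) w ∉ Ω} ∧
    P {w | X ((volume Ω).toReal / 8) w ∉ Ω} ≥ ENNReal.ofReal (Real.exp (-(2 / π))) ∧
    Real.exp (-(2 / π)) > 1 / 2 := by
  have hπ : (0:ℝ) < π := Real.pi_pos
  set T : ℝ := (volume Ω).toReal with hTdef
  have hT : 0 < T := ENNReal.toReal_pos h0.ne' hfin.ne
  set f : EuclideanSpace ℝ (Fin 2) → ℝ :=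
    fun y => (2 / (π * T)) * Real.exp (-(2 * ‖x - y‖ ^ 2 / T)) with hf
  set μ : Measure (EuclideanSpace ℝ (Fin 2)) :=
    volume.withDensity fun y => ENNReal.ofReal (f y) with hμ
  have hfcont : Continuous f := by
    apply Continuous.mul continuous_const
    apply Real.continuous_exp.comp
    continuity
  have hfnn : ∀ y, 0 ≤ f y := fun y => by positivity
  set r : ℝ := Real.sqrt (T / π) with hrdef
  have hrpos : 0 < r := Real.sqrt_pos.mpr (by positivity)
  have hr2 : r ^ 2 = T / π := Real.sq_sqrt (by positivity)
  set B : Set (EuclideanSpace ℝ (Fin 2)) := ball x r with hB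
  -- measure of Ωᶜ under the law
  have hmap : ∀ s : Set (EuclideanSpace ℝ (Fin 2)), MeasurableSet s →
      P (X (T / 8) ⁻¹' s) = μ s := by
    intro s hs
    rw [← Measure.map_apply hX hs, hlaw]
  have hμuniv : μ univ = 1 := by
    rw [← hmap univ MeasurableSet.univ]; simp
  -- volume of the ball equals volume of Ω
  have hBvol : volume B = volume Ω := by
    rw [hB, EuclideanSpace.volume_ball]
    simp only [Fintype.card_fin]
    rw [show ((2:ℕ):ℝ)/2 + 1 = 2 by norm_num, Real.Gamma_two,
      Real.sq_sqrt Real.pi_pos.le]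
    rw [← ENNReal.ofReal_pow hrpos.le, ← ENNReal.ofReal_mul (by positivity), hr2]
    rw [show T / π * (π / 1) = T by field_simp]
    exact ENNReal.ofReal_toReal hfin.ne
  -- rearrangement: μ Ωᶜ ≥ μ Bᶜ
  set m : ℝ := (2 / (π * T)) * Real.exp (-(2 * r ^ 2 / T)) with hmdef
  have hthem : ∀ y, y ∈ B → m ≤ f y := by
    intro y hy
    rw [hB, mem_ball, dist_comm, dist_eq_norm] at hy
    apply mul_le_mul_of_nonneg_left _ (by positivity)
    apply Real.exp_le_exp.mpr
    rw [neg_le_neg_iff]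
    apply div_le_div_of_nonneg_right _ hT.le
    · apply mul_le_mul_of_nonneg_left _ (by norm_num)
      calc ‖x - y‖^2 ≤ r^2 := by
            apply sq_le_sq' _ hy.le
            linarith [norm_nonneg (x - y)]
        _ = r^2 := rfl
  have hthem' : ∀ y, y ∉ B → f y ≤ m := by
    intro y hy
    rw [hB, mem_ball, dist_comm, dist_eq_norm, not_lt] at hy
    apply mul_le_mul_of_nonneg_left _ (by positivity)
    apply Real.exp_le_exp.mpr
    rw [neg_le_neg_iff]
    apply div_le_div_of_nonneg_right _ hT.le
    apply mul_le_mul_of_nonneg_left _ (by norm_num)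
    exact pow_le_pow_left₀ hrpos.le hy 2
  have hvols : volume (B \ Ω) = volume (Ω \ B) := by
    have h1 : volume (B ∩ Ω) + volume (B \ Ω) = volume B :=
      measure_inter_add_diff B hm
    have h2 : volume (Ω ∩ B) + volume (Ω \ B) = volume Ω :=
      measure_inter_add_diff Ω measurableSet_ball
    rw [Set.inter_comm] at h2
    rw [hBvol, ← h2] at h1
    have hne : volume (B ∩ Ω) ≠ ⊤ :=
      (lt_of_le_of_lt (measure_mono Set.inter_subset_right) hfin).ne
    exact (ENNReal.add_right_inj hne).mp h1
  have hrearr : μ Bᶜ ≤ μ Ωᶜ := by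
    have e1 : μ Ωᶜ = μ (Ωᶜ ∩ B) + μ (Ωᶜ \ B) :=
      (measure_inter_add_diff Ωᶜ measurableSet_ball).symm
    have e2 : μ Bᶜ = μ (Bᶜ ∩ Ω) + μ (Bᶜ \ Ω) :=
      (measure_inter_add_diff Bᶜ hm).symm
    have e3 : Ωᶜ \ B = Bᶜ \ Ω := by ext y; simp [And.comm]
    rw [e1, e2, e3]
    apply add_le_add_left
    have key1 : ENNReal.ofReal m * volume (B \ Ω) ≤ μ (Ωᶜ ∩ B) := by
      rw [hμ, withDensity_apply _ (hm.compl.inter measurableSet_ball)]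
      calc ENNReal.ofReal m * volume (B \ Ω)
          = ∫⁻ _ in Ωᶜ ∩ B, ENNReal.ofReal m := by
            rw [setLIntegral_const, Set.inter_comm, Set.diff_eq]
        _ ≤ ∫⁻ y in Ωᶜ ∩ B, ENNReal.ofReal (f y) := by
            apply setLIntegral_mono (hfcont.measurable.ennreal_ofReal)
            intro y hy
            exact ENNReal.ofReal_le_ofReal (hthem y hy.2)
    have key2 : μ (Bᶜ ∩ Ω) ≤ ENNReal.ofReal m * volume (Ω \ B) := by
      rw [hμ, withDensity_apply _ (measurableSet_ball.compl.inter hm)]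
      calc ∫⁻ y in Bᶜ ∩ Ω, ENNReal.ofReal (f y)
          ≤ ∫⁻ _ in Bᶜ ∩ Ω, ENNReal.ofReal m := by
            apply setLIntegral_mono measurable_const
            intro y hy
            exact ENNReal.ofReal_le_ofReal (hthem' y hy.1)
        _ = ENNReal.ofReal m * volume (Ω \ B) := by
            rw [setLIntegral_const, Set.inter_comm, Set.diff_eq]
    calc μ (Bᶜ ∩ Ω) ≤ ENNReal.ofReal m * volume (Ω \ B) := key2
      _ = ENNReal.ofReal m * volume (B \ Ω) := by rw [hvols]
      _ ≤ μ (Ωᶜ ∩ B) := key1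
  -- compute μ Bᶜ
  have hint : IntegrableOn f B := by
    apply ((hfcont.continuousOn).integrableOn_compact
      (isCompact_closedBall x r)).mono_set ball_subset_closedBall
  have hμB : μ B = ENNReal.ofReal (1 - Real.exp (-(2/π))) := by
    rw [hμ, withDensity_apply _ measurableSet_ball,
      ← ofReal_integral_eq_lintegral_ofReal hint
        (Filter.Eventually.of_forall (fun y => hfnn y))]
    congr 1
    exact ball_int T hT x
  have hexple : Real.exp (-(2/π)) ≤ 1 :=
    Real.exp_le_one_iff.mpr (by positivity |> neg_nonpos_of_nonneg)
  have hμBc : μ Bᶜ = ENNReal.ofReal (Real.exp (-(2/π))) := by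
    rw [measure_compl measurableSet_ball
      (by rw [hμB]; exact ENNReal.ofReal_ne_top), hμuniv, hμB,
      ← ENNReal.ofReal_one, ← ENNReal.ofReal_sub _ (by linarith)]
    norm_num
  -- assemble
  have hτ : (volume Ω).toReal / 8 = T / 8 := rfl
  have hset : {w | X (T/8) w ∉ Ω} = X (T/8) ⁻¹' Ωᶜ := rfl
  refine ⟨?_, ?_, ?_⟩
  · apply measure_mono
    intro w hw
    exact ⟨T/8, ⟨by positivity, le_refl _⟩, hw⟩
  · rw [hset, hmap Ωᶜ hm.compl, ← hμBc]
    exact hrearr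
  · rw [gt_iff_lt, show (1:ℝ)/2 = Real.exp (Real.log (1/2)) by
      rw [Real.exp_log]; norm_num]
    apply Real.exp_lt_exp.mpr
    rw [one_div, Real.log_inv]
    have h2 : (0.6931471803:ℝ) < Real.log 2 := Real.log_two_gt_d9
    have h3 : (3.141592:ℝ) < π := Real.pi_gt_d6
    rw [neg_lt_neg_iff, div_lt_iff₀ hπ]
    nlinarith
end

section
/- For all r > 0 and t > 0: ∫₀^t (4πs)^{−1} exp(−r²/(4s)) ds ≤ (1/(4π))·max{1, 2 + log(4t/r²)}·max{1, e·exp(−r²/(4t))}; in particular the kernel ∫₀^{|Ω|} p_{ℝ²}(s,x,y) ds is bounded by an absolute constant times max{1, log(|Ω|/‖x−y‖²)} for x ≠ y and any finite-measure Ω ⊂ ℝ². -/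
open Real MeasureTheory Set

private lemma xexp_le (x : ℝ) : x * Real.exp (-x) ≤ Real.exp (-1) := by
  have h1 : x ≤ Real.exp (x - 1) := by
    have := Real.add_one_le_exp (x - 1); linarith
  calc x * Real.exp (-x) ≤ Real.exp (x - 1) * Real.exp (-x) :=
        mul_le_mul_of_nonneg_right h1 (Real.exp_nonneg _)
    _ = Real.exp (-1) := by rw [← Real.exp_add]; ring_nf

private lemma f_meas (r : ℝ) :
    Measurable (fun s : ℝ => (4 * π * s)⁻¹ * Real.exp (-(r ^ 2 / (4 * s)))) := by
  fun_prop

private lemma f_le_glob (r : ℝ) (hr : 0 < r) {s : ℝ} (hs : 0 < s) :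
    (4 * π * s)⁻¹ * Real.exp (-(r ^ 2 / (4 * s))) ≤ Real.exp (-1) / (π * r ^ 2) := by
  have hπ := Real.pi_pos
  have key : (4 * π * s)⁻¹ * Real.exp (-(r ^ 2 / (4 * s)))
      = (π * r ^ 2)⁻¹ * ((r ^ 2 / (4 * s)) * Real.exp (-(r ^ 2 / (4 * s)))) := by
    field_simp
  rw [key]
  calc (π * r ^ 2)⁻¹ * ((r ^ 2 / (4 * s)) * Real.exp (-(r ^ 2 / (4 * s))))
      ≤ (π * r ^ 2)⁻¹ * Real.exp (-1) :=
        mul_le_mul_of_nonneg_left (xexp_le _) (by positivity)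
    _ = Real.exp (-1) / (π * r ^ 2) := by ring

private lemma f_int (r : ℝ) (hr : 0 < r) (a b : ℝ) (ha : 0 ≤ a) :
    IntegrableOn (fun s : ℝ => (4 * π * s)⁻¹ * Real.exp (-(r ^ 2 / (4 * s)))) (Set.Ioc a b) := by
  apply Integrable.mono' (g := fun _ => Real.exp (-1) / (π * r ^ 2))
  · exact integrableOn_const measure_Ioc_lt_top.ne
  · exact ((f_meas r).aestronglyMeasurable).restrict
  · filter_upwards [ae_restrict_mem measurableSet_Ioc] with s hs
    have hs0 : 0 < s := lt_of_le_of_lt ha hs.1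
    rw [Real.norm_eq_abs, abs_of_nonneg (by positivity)]
    exact f_le_glob r hr hs0

private lemma lemA (r c : ℝ) (hr : 0 < r) (hc : 0 < c) (h : 4 * c ≤ r ^ 2) :
    (∫ s in Set.Ioc (0 : ℝ) c, (4 * π * s)⁻¹ * Real.exp (-(r ^ 2 / (4 * s)))) ≤
      (4 * π)⁻¹ * Real.exp (-1) := by
  have hπ := Real.pi_pos
  have key : ∀ s ∈ Set.Ioc (0 : ℝ) c,
      ‖(4 * π * s)⁻¹ * Real.exp (-(r ^ 2 / (4 * s)))‖ ≤ Real.exp (-1) / (4 * π * c) := by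
    intro s hs
    obtain ⟨hs0, hsc⟩ := hs
    rw [Real.norm_eq_abs, abs_of_nonneg (by positivity)]
    have h1 : Real.exp (-(r ^ 2 / (4 * s))) ≤ Real.exp (-(c / s)) := by
      apply Real.exp_le_exp.2
      have : c / s ≤ r ^ 2 / (4 * s) := by
        rw [div_le_div_iff₀ hs0 (by positivity)]; nlinarith
      linarith
    calc (4 * π * s)⁻¹ * Real.exp (-(r ^ 2 / (4 * s)))
        ≤ (4 * π * s)⁻¹ * Real.exp (-(c / s)) :=
          mul_le_mul_of_nonneg_left h1 (by positivity)
      _ = (4 * π * c)⁻¹ * ((c / s) * Real.exp (-(c / s))) := by field_simp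
      _ ≤ (4 * π * c)⁻¹ * Real.exp (-1) :=
          mul_le_mul_of_nonneg_left (xexp_le _) (by positivity)
      _ = Real.exp (-1) / (4 * π * c) := by ring
  have hnorm := norm_setIntegral_le_of_norm_le_const (μ := volume)
    (s := Set.Ioc (0 : ℝ) c) measure_Ioc_lt_top key
  have hvol : (volume (Set.Ioc (0 : ℝ) c)).toReal = c := by
    rw [Real.volume_Ioc]; simp [ENNReal.toReal_ofReal hc.le]
  calc (∫ s in Set.Ioc (0 : ℝ) c, (4 * π * s)⁻¹ * Real.exp (-(r ^ 2 / (4 * s))))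
      ≤ ‖∫ s in Set.Ioc (0 : ℝ) c, (4 * π * s)⁻¹ * Real.exp (-(r ^ 2 / (4 * s)))‖ :=
        le_abs_self _
    _ ≤ Real.exp (-1) / (4 * π * c) * (volume (Set.Ioc (0 : ℝ) c)).toReal := hnorm
    _ = (4 * π)⁻¹ * Real.exp (-1) := by rw [hvol]; field_simp

private lemma lemB (r t : ℝ) (hr : 0 < r) (ht : 0 < t) (h : r ^ 2 ≤ 4 * t) :
    (∫ s in Set.Ioc (0 : ℝ) t, (4 * π * s)⁻¹ * Real.exp (-(r ^ 2 / (4 * s)))) ≤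
      (4 * π)⁻¹ * (2 + Real.log (4 * t / r ^ 2)) := by
  have hπ := Real.pi_pos
  set f : ℝ → ℝ := fun s => (4 * π * s)⁻¹ * Real.exp (-(r ^ 2 / (4 * s))) with hf
  set a : ℝ := r ^ 2 / 4 with ha
  have ha0 : 0 < a := by positivity
  have hat : a ≤ t := by rw [ha]; linarith
  have hi1 : IntervalIntegrable f volume 0 a :=
    (intervalIntegrable_iff_integrableOn_Ioc_of_le ha0.le).2 (f_int r hr 0 a le_rfl)
  have hi2 : IntervalIntegrable f volume a t :=
    (intervalIntegrable_iff_integrableOn_Ioc_of_le hat).2 (f_int r hr a t ha0.le)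
  have hsplit : (∫ s in Set.Ioc (0 : ℝ) t, f s)
      = (∫ s in Set.Ioc (0 : ℝ) a, f s) + (∫ s in Set.Ioc a t, f s) := by
    rw [← intervalIntegral.integral_of_le ht.le, ← intervalIntegral.integral_of_le ha0.le,
      ← intervalIntegral.integral_of_le hat]
    exact (intervalIntegral.integral_add_adjacent_intervals hi1 hi2).symm
  have hpiece1 : (∫ s in Set.Ioc (0 : ℝ) a, f s) ≤ (4 * π)⁻¹ * 1 := by
    have h1 := lemA r a hr ha0 (by rw [ha]; linarith)
    have he : Real.exp (-1) ≤ 1 := Real.exp_le_one_iff.2 (by norm_num)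
    calc (∫ s in Set.Ioc (0 : ℝ) a, f s) ≤ (4 * π)⁻¹ * Real.exp (-1) := h1
      _ ≤ (4 * π)⁻¹ * 1 := mul_le_mul_of_nonneg_left he (by positivity)
  have hg : IntegrableOn (fun s : ℝ => (4 * π)⁻¹ * s⁻¹) (Set.Ioc a t) := by
    have hcont : ContinuousOn (fun s : ℝ => (4 * π)⁻¹ * s⁻¹) (Set.Icc a t) :=
      continuousOn_const.mul (continuousOn_id.inv₀
        (fun x hx => ne_of_gt (lt_of_lt_of_le ha0 hx.1)))
    exact (hcont.integrableOn_Icc).mono_set Set.Ioc_subset_Icc_self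
  have hpiece2 : (∫ s in Set.Ioc a t, f s) ≤ (4 * π)⁻¹ * Real.log (4 * t / r ^ 2) := by
    have hmono : (∫ s in Set.Ioc a t, f s) ≤ ∫ s in Set.Ioc a t, (4 * π)⁻¹ * s⁻¹ := by
      apply setIntegral_mono_on (f_int r hr a t ha0.le) hg measurableSet_Ioc
      intro s hs
      have hs0 : 0 < s := lt_of_lt_of_le ha0 hs.1.le
      have he1 : Real.exp (-(r ^ 2 / (4 * s))) ≤ 1 :=
        Real.exp_le_one_iff.2 (neg_nonpos.2 (by positivity))
      calc f s ≤ (4 * π * s)⁻¹ * 1 := mul_le_mul_of_nonneg_left he1 (by positivity)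
        _ = (4 * π)⁻¹ * s⁻¹ := by rw [mul_one, mul_inv]
    have hcomp : (∫ s in Set.Ioc a t, (4 * π)⁻¹ * s⁻¹)
        = (4 * π)⁻¹ * Real.log (4 * t / r ^ 2) := by
      rw [← intervalIntegral.integral_of_le hat, intervalIntegral.integral_const_mul,
        integral_inv_of_pos ha0 (ha0.trans_le hat)]
      congr 1
      rw [ha]
      rw [div_div_eq_mul_div]
      ring_nf
    linarith [hmono, hcomp.le, hcomp.ge]
  calc (∫ s in Set.Ioc (0 : ℝ) t, f s)
      = (∫ s in Set.Ioc (0 : ℝ) a, f s) + (∫ s in Set.Ioc a t, f s) := hsplit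
    _ ≤ (4 * π)⁻¹ * 1 + (4 * π)⁻¹ * Real.log (4 * t / r ^ 2) := add_le_add hpiece1 hpiece2
    _ ≤ (4 * π)⁻¹ * (2 + Real.log (4 * t / r ^ 2)) := by
        have : (0:ℝ) ≤ (4 * π)⁻¹ := by positivity
        nlinarith

theorem stmt18 :
    (∀ r t : ℝ, 0 < r → 0 < t →
      (∫ s in Set.Ioc (0 : ℝ) t, (4 * π * s)⁻¹ * Real.exp (-(r ^ 2 / (4 * s)))) ≤
        (1 / (4 * π)) * max 1 (2 + Real.log (4 * t / r ^ 2)) *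
          max 1 (Real.exp 1 * Real.exp (-(r ^ 2 / (4 * t))))) ∧
    ∃ C : ℝ, 0 < C ∧
      ∀ Ω : Set (EuclideanSpace ℝ (Fin 2)), 0 < volume Ω → volume Ω < ⊤ →
        ∀ x y : EuclideanSpace ℝ (Fin 2), x ≠ y →
          (∫ s in Set.Ioc (0 : ℝ) (volume Ω).toReal,
              (4 * π * s)⁻¹ * Real.exp (-(‖x - y‖ ^ 2 / (4 * s)))) ≤
            C * max 1 (Real.log ((volume Ω).toReal / ‖x - y‖ ^ 2)) := by
  have hπ := Real.pi_pos
  constructor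
  · intro r t hr ht
    have hm1 : (1:ℝ) ≤ max 1 (2 + Real.log (4 * t / r ^ 2)) := le_max_left _ _
    have hm2 : (1:ℝ) ≤ max 1 (Real.exp 1 * Real.exp (-(r ^ 2 / (4 * t)))) := le_max_left _ _
    rcases le_or_gt (r ^ 2) (4 * t) with hc | hc
    · have hlog : 0 ≤ Real.log (4 * t / r ^ 2) :=
        Real.log_nonneg ((one_le_div (by positivity)).2 hc)
      have hmax : max 1 (2 + Real.log (4 * t / r ^ 2)) = 2 + Real.log (4 * t / r ^ 2) :=
        max_eq_right (by linarith)
      calc (∫ s in Set.Ioc (0 : ℝ) t, (4 * π * s)⁻¹ * Real.exp (-(r ^ 2 / (4 * s))))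
          ≤ (4 * π)⁻¹ * (2 + Real.log (4 * t / r ^ 2)) := lemB r t hr ht hc
        _ = (1 / (4 * π)) * max 1 (2 + Real.log (4 * t / r ^ 2)) * 1 := by
            rw [hmax]; ring
        _ ≤ (1 / (4 * π)) * max 1 (2 + Real.log (4 * t / r ^ 2)) *
              max 1 (Real.exp 1 * Real.exp (-(r ^ 2 / (4 * t)))) := by
            apply mul_le_mul_of_nonneg_left hm2
            have : (0:ℝ) ≤ 1 / (4 * π) := by positivity
            nlinarith
    · have he : Real.exp (-1) ≤ 1 := Real.exp_le_one_iff.2 (by norm_num)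
      calc (∫ s in Set.Ioc (0 : ℝ) t, (4 * π * s)⁻¹ * Real.exp (-(r ^ 2 / (4 * s))))
          ≤ (4 * π)⁻¹ * Real.exp (-1) := lemA r t hr ht hc.le
        _ ≤ (1 / (4 * π)) * 1 * 1 := by
            rw [one_div, mul_one]
            exact mul_le_mul_of_nonneg_left he (by positivity)
        _ ≤ (1 / (4 * π)) * max 1 (2 + Real.log (4 * t / r ^ 2)) *
              max 1 (Real.exp 1 * Real.exp (-(r ^ 2 / (4 * t)))) := by
            have h0 : (0:ℝ) ≤ 1 / (4 * π) := by positivity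
            have hmm : (1:ℝ) * 1 ≤ max 1 (2 + Real.log (4 * t / r ^ 2)) *
                max 1 (Real.exp 1 * Real.exp (-(r ^ 2 / (4 * t)))) :=
              mul_le_mul hm1 hm2 zero_le_one (zero_le_one.trans hm1)
            rw [mul_assoc, mul_assoc]
            exact mul_le_mul_of_nonneg_left hmm h0
  · refine ⟨1, one_pos, fun Ω hΩ0 hΩtop x y hxy => ?_⟩
    set T : ℝ := (volume Ω).toReal with hT
    have hT0 : 0 < T := ENNReal.toReal_pos hΩ0.ne' hΩtop.ne
    set r : ℝ := ‖x - y‖ with hrdef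
    have hr : 0 < r := norm_pos_iff.2 (sub_ne_zero.2 hxy)
    have hm : (1:ℝ) ≤ max 1 (Real.log (T / r ^ 2)) := le_max_left _ _
    rcases le_or_gt (r ^ 2) (4 * T) with hc | hc
    · have hlog4 : Real.log (4 * T / r ^ 2) = Real.log 4 + Real.log (T / r ^ 2) := by
        rw [mul_div_assoc, Real.log_mul (by norm_num) (by positivity)]
      have hlogle : Real.log (T / r ^ 2) ≤ max 1 (Real.log (T / r ^ 2)) := le_max_right _ _
      have hlog4le : Real.log 4 ≤ 3 := by
        have := Real.log_le_sub_one_of_pos (show (0:ℝ) < 4 by norm_num); linarith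
      have hπ3 : (3:ℝ) < π := Real.pi_gt_three
      have key := lemB r T hr hT0 hc
      rw [one_mul]
      rw [hlog4] at key
      have hPpos : (0:ℝ) < 4 * π := by positivity
      calc (∫ s in Set.Ioc (0 : ℝ) T, (4 * π * s)⁻¹ * Real.exp (-(r ^ 2 / (4 * s))))
          ≤ (4 * π)⁻¹ * (2 + (Real.log 4 + Real.log (T / r ^ 2))) := key
        _ ≤ max 1 (Real.log (T / r ^ 2)) := by
            rw [inv_mul_le_iff₀ hPpos]
            nlinarith
    · have he : Real.exp (-1) ≤ 1 := Real.exp_le_one_iff.2 (by norm_num)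
      calc (∫ s in Set.Ioc (0 : ℝ) T, (4 * π * s)⁻¹ * Real.exp (-(r ^ 2 / (4 * s))))
          ≤ (4 * π)⁻¹ * Real.exp (-1) := lemA r T hr hT0 hc.le
        _ ≤ 1 * max 1 (Real.log (T / r ^ 2)) := by
            rw [one_mul]
            have hinv : (4 * π)⁻¹ ≤ 1 := inv_le_one_of_one_le₀ (by nlinarith [Real.pi_gt_three])
            have h1 : (4 * π)⁻¹ * Real.exp (-1) ≤ 1 * 1 :=
              mul_le_mul hinv he (Real.exp_pos _).le zero_le_one
            linarith
end
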